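/- Let H be a reproducing kernel Hilbert space with kernel K satisfying K(x,x) ≤ κ² for all x ∈ X, let the loss l be σ-admissible with respect to H, and for λ > 0 let A_S be a minimizer over h ∈ H of (1/m)Σ_{j=1}^m l(h, z_j) + λ‖h‖_K², and A_{S^{-i}} a minimizer over h ∈ H of (1/m)Σ_{j≠i} l(h, z_j) + λ‖h‖_K². Then for every training set S = (z_1,…,z_m) with z_j = (x_j,y_j), every 1 ≤ i ≤ m, and every z = (x,y): |l(A_S, z) − l(A_{S^{-i}}, z)| ≤ σ²·κ(x_i)·κ(x)/(2λm); in particular |l(A_S, z) − l(A_{S^{-i}}, z)| ≤ σ²κ²/(2λm). -/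

import Mathlib

open scoped RealInnerProductSpace

lemma aux_norm_id {H : Type*} [NormedAddCommGroup H] [InnerProductSpace ℝ H]
    (a b : H) (t : ℝ) :
    ‖(1-t)•a + t•b‖^2 + ‖t•a + (1-t)•b‖^2
      = ‖a‖^2 + ‖b‖^2 - 2*t*(1-t)*‖b-a‖^2 := by
  simp only [← real_inner_self_eq_norm_sq, inner_add_left, inner_add_right,
    inner_sub_left, inner_sub_right, real_inner_smul_left, real_inner_smul_right]
  rw [real_inner_comm b a]; ring

/-- Lemma 4.3 of the paper / variant of Theorem 22 of
Bousquet–Elisseeff. Let `H` be an RKHS of real functions on `X` (realized by a linear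
evaluation map `ev : H →ₗ[ℝ] X → ℝ` and a feature map `Kx : X → H` with the reproducing
property `ev h x = ⟪h, Kx x⟫`), with `κ(x) = √K(x,x) = ‖Kx x‖` bounded by `κ`. If the loss
`l(h,(x,y)) = c (ev h x) y` is `σ`-admissible and `A_S`, `A_{S\i}` minimize the
`λ‖·‖²`-regularized empirical risks on `S` and `S^{\i}` respectively, then
`|l(A_S,z) − l(A_{S\i},z)| ≤ σ²·κ(x_i)·κ(x)/(2λm) ≤ σ²κ²/(2λm)`. -/
theorem rkhs_regularized_erm_locally_elastic_stability
    (X Y H : Type*) [NormedAddCommGroup H] [InnerProductSpace ℝ H]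
    (ev : H →ₗ[ℝ] X → ℝ) (Kx : X → H)
    (hrepr : ∀ (h : H) (x : X), ev h x = ⟪h, Kx x⟫)
    (c : ℝ → Y → ℝ) (σ : ℝ) (hσ : 0 ≤ σ)
    (hconv : ∀ y' : Y, ConvexOn ℝ Set.univ fun t => c t y')
    (hadm : ∀ (y₁ y₂ : ℝ) (y' : Y), |c y₁ y' - c y₂ y'| ≤ σ * |y₁ - y₂|)
    (κ : ℝ) (hκ0 : 0 ≤ κ) (hκ : ∀ x : X, Real.sqrt ⟪Kx x, Kx x⟫ ≤ κ)
    (lam : ℝ) (hlam : 0 < lam)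
    (m : ℕ) (hm : 0 < m) (S : Fin m → X × Y) (i : Fin m)
    (fS fi : H)
    (hfS : ∀ h : H,
      (∑ j, c (ev fS (S j).1) (S j).2) / m + lam * ‖fS‖ ^ 2
        ≤ (∑ j, c (ev h (S j).1) (S j).2) / m + lam * ‖h‖ ^ 2)
    (hfi : ∀ h : H,
      (∑ j ∈ Finset.univ.erase i, c (ev fi (S j).1) (S j).2) / m + lam * ‖fi‖ ^ 2
        ≤ (∑ j ∈ Finset.univ.erase i, c (ev h (S j).1) (S j).2) / m + lam * ‖h‖ ^ 2)
    (z : X × Y) :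
    |c (ev fS z.1) z.2 - c (ev fi z.1) z.2|
        ≤ σ ^ 2 * Real.sqrt ⟪Kx (S i).1, Kx (S i).1⟫ * Real.sqrt ⟪Kx z.1, Kx z.1⟫ /
            (2 * lam * m) ∧
      |c (ev fS z.1) z.2 - c (ev fi z.1) z.2| ≤ σ ^ 2 * κ ^ 2 / (2 * lam * m) := by
  have hM : (0:ℝ) < m := by exact_mod_cast hm
  set Δ : H := fi - fS with hΔ
  set d : ℝ := ev fi (S i).1 - ev fS (S i).1 with hd
  -- evaluation of convex combinations
  have hev : ∀ (t : ℝ) (x : X),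
      ev ((1-t)•fS + t•fi) x = (1-t) * ev fS x + t * ev fi x := by
    intro t x
    simp [map_add, map_smul]
  have hev' : ∀ (t : ℝ) (x : X),
      ev (t•fS + (1-t)•fi) x = t * ev fS x + (1-t) * ev fi x := by
    intro t x
    simp [map_add, map_smul]
  -- key inequality
  have key : 2 * lam * ‖Δ‖^2 ≤ σ * |d| / m := by
    have step : ∀ t : ℝ, t ∈ Set.Ioo (0:ℝ) 1 →
        (1 - t) * (2 * lam * ‖Δ‖^2) ≤ σ * |d| / m := by
      intro t ht
      obtain ⟨ht0, ht1⟩ := ht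
      set ft : H := (1-t)•fS + t•fi
      set gt : H := t•fS + (1-t)•fi
      have h1 := hfS ft
      have h2 := hfi gt
      -- convexity on each term
      have hc1 : ∀ j : Fin m, c (ev ft (S j).1) (S j).2
          ≤ (1-t) * c (ev fS (S j).1) (S j).2 + t * c (ev fi (S j).1) (S j).2 := by
        intro j
        have := (hconv (S j).2).2 (Set.mem_univ (ev fS (S j).1)) (Set.mem_univ (ev fi (S j).1))
          (show (0:ℝ) ≤ 1 - t by linarith) (show (0:ℝ) ≤ t from ht0.le)
          (show (1 - t) + t = 1 by ring)
        simpa [ft, hev t, smul_eq_mul] using this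
      have hc2 : ∀ j : Fin m, c (ev gt (S j).1) (S j).2
          ≤ t * c (ev fS (S j).1) (S j).2 + (1-t) * c (ev fi (S j).1) (S j).2 := by
        intro j
        have := (hconv (S j).2).2 (Set.mem_univ (ev fS (S j).1)) (Set.mem_univ (ev fi (S j).1))
          (show (0:ℝ) ≤ t from ht0.le) (show (0:ℝ) ≤ 1 - t by linarith)
          (show t + (1 - t) = 1 by ring)
        simpa [gt, hev' t, smul_eq_mul] using this
      -- sums over erase i
      have hsum : (∑ j ∈ Finset.univ.erase i, c (ev ft (S j).1) (S j).2)
            + (∑ j ∈ Finset.univ.erase i, c (ev gt (S j).1) (S j).2)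
          ≤ (∑ j ∈ Finset.univ.erase i, c (ev fS (S j).1) (S j).2)
            + (∑ j ∈ Finset.univ.erase i, c (ev fi (S j).1) (S j).2) := by
        rw [← Finset.sum_add_distrib, ← Finset.sum_add_distrib]
        refine Finset.sum_le_sum fun j _ => ?_
        have := hc1 j
        have := hc2 j
        linarith
      -- the i-th term
      have hi : c (ev ft (S i).1) (S i).2 - c (ev fS (S i).1) (S i).2 ≤ σ * (t * |d|) := by
        have h := hadm (ev ft (S i).1) (ev fS (S i).1) (S i).2
        have h' : |ev ft (S i).1 - ev fS (S i).1| = t * |d| := by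
          rw [hev t]
          have : (1-t) * ev fS (S i).1 + t * ev fi (S i).1 - ev fS (S i).1 = t * d := by
            rw [hd]; ring
          rw [this, abs_mul, abs_of_pos ht0]
        calc c (ev ft (S i).1) (S i).2 - c (ev fS (S i).1) (S i).2
            ≤ |c (ev ft (S i).1) (S i).2 - c (ev fS (S i).1) (S i).2| := le_abs_self _
          _ ≤ σ * |ev ft (S i).1 - ev fS (S i).1| := h
          _ = σ * (t * |d|) := by rw [h']
      -- split full sums
      have hsplit : ∀ g : H, (∑ j, c (ev g (S j).1) (S j).2)
          = (∑ j ∈ Finset.univ.erase i, c (ev g (S j).1) (S j).2) + c (ev g (S i).1) (S i).2 := by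
        intro g
        rw [Finset.sum_erase_add Finset.univ _ (Finset.mem_univ i)]
      rw [hsplit fS, hsplit ft] at h1
      -- norm identity
      have hnorm : ‖ft‖^2 + ‖gt‖^2 = ‖fS‖^2 + ‖fi‖^2 - 2*t*(1-t)*‖Δ‖^2 := by
        rw [hΔ]; exact aux_norm_id fS fi t
      -- combine
      have hcomb : lam * (2*t*(1-t)*‖Δ‖^2) ≤ (σ * (t * |d|)) / m := by
        have hdiv : ((∑ j ∈ Finset.univ.erase i, c (ev ft (S j).1) (S j).2)
              + (∑ j ∈ Finset.univ.erase i, c (ev gt (S j).1) (S j).2)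
              + (c (ev ft (S i).1) (S i).2 - c (ev fS (S i).1) (S i).2)
              - (∑ j ∈ Finset.univ.erase i, c (ev fS (S j).1) (S j).2)
              - (∑ j ∈ Finset.univ.erase i, c (ev fi (S j).1) (S j).2)) / m
            ≤ (σ * (t * |d|)) / m := by
          gcongr
          · linarith
        have e1 : ((∑ j ∈ Finset.univ.erase i, c (ev ft (S j).1) (S j).2) + c (ev ft (S i).1) (S i).2) / m
            = (∑ j ∈ Finset.univ.erase i, c (ev ft (S j).1) (S j).2) / m + c (ev ft (S i).1) (S i).2 / m :=
          add_div _ _ _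
        have e2 : ((∑ j ∈ Finset.univ.erase i, c (ev fS (S j).1) (S j).2) + c (ev fS (S i).1) (S i).2) / m
            = (∑ j ∈ Finset.univ.erase i, c (ev fS (S j).1) (S j).2) / m + c (ev fS (S i).1) (S i).2 / m :=
          add_div _ _ _
        rw [e1, e2] at h1
        have hnorm' : lam * ‖ft‖^2 + lam * ‖gt‖^2
            = lam * ‖fS‖^2 + lam * ‖fi‖^2 - lam * (2*t*(1-t)*‖Δ‖^2) := by
          rw [← mul_add, hnorm]; ring
        -- from h1 + h2:
        -- lam*(2t(1-t)‖Δ‖²) ≤ (sum differences + i-term diff)/m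
        have hA : lam * (2*t*(1-t)*‖Δ‖^2)
            ≤ ((∑ j ∈ Finset.univ.erase i, c (ev ft (S j).1) (S j).2)
              + (∑ j ∈ Finset.univ.erase i, c (ev gt (S j).1) (S j).2)
              + (c (ev ft (S i).1) (S i).2 - c (ev fS (S i).1) (S i).2)
              - (∑ j ∈ Finset.univ.erase i, c (ev fS (S j).1) (S j).2)
              - (∑ j ∈ Finset.univ.erase i, c (ev fi (S j).1) (S j).2)) / m := by
          have hdistrib : ∀ a b cc dd e : ℝ, (a + b + cc - dd - e)/(m:ℝ)
              = a/m + b/m + cc/m - dd/m - e/m := by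
            intro a b cc dd e; field_simp
          rw [hdistrib]
          have hsub : (c (ev ft (S i).1) (S i).2 - c (ev fS (S i).1) (S i).2) / (m:ℝ)
              = c (ev ft (S i).1) (S i).2 / m - c (ev fS (S i).1) (S i).2 / m := sub_div _ _ _
          linarith [h1, h2, hnorm', hsub]
        exact le_trans hA hdiv
      -- divide by t
      have : (1 - t) * (2 * lam * ‖Δ‖^2) * t ≤ (σ * |d| / m) * t := by
        calc (1 - t) * (2 * lam * ‖Δ‖^2) * t = lam * (2*t*(1-t)*‖Δ‖^2) := by ring
          _ ≤ (σ * (t * |d|)) / m := hcomb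
          _ = (σ * |d| / m) * t := by ring
      exact le_of_mul_le_mul_right this ht0
    -- limit t → 0⁺
    have hmem : Set.Ioo (0:ℝ) 1 ∈ nhdsWithin (0:ℝ) (Set.Ioi 0) :=
      Ioo_mem_nhdsGT_of_mem (by constructor <;> norm_num)
    have htend : Filter.Tendsto (fun t : ℝ => (1 - t) * (2 * lam * ‖Δ‖^2))
        (nhdsWithin 0 (Set.Ioi 0)) (nhds (2 * lam * ‖Δ‖^2)) := by
      have h0 : Filter.Tendsto (fun t : ℝ => (1 - t) * (2 * lam * ‖Δ‖^2))
          (nhds 0) (nhds ((1 - 0) * (2 * lam * ‖Δ‖^2))) := by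
        exact ((continuous_const.sub continuous_id).mul continuous_const).tendsto 0
      simpa using h0.mono_left nhdsWithin_le_nhds
    refine le_of_tendsto htend ?_
    filter_upwards [hmem] with t ht using step t ht
  -- from key: ‖Δ‖ bound
  have hKnorm : ∀ x : X, Real.sqrt ⟪Kx x, Kx x⟫ = ‖Kx x‖ := by
    intro x
    rw [real_inner_self_eq_norm_sq, Real.sqrt_sq (norm_nonneg _)]
  have hd_le : |d| ≤ ‖Δ‖ * ‖Kx (S i).1‖ := by
    have : d = ⟪Δ, Kx (S i).1⟫ := by
      rw [hd, hrepr fi, hrepr fS, hΔ, inner_sub_left]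
    rw [this]
    exact abs_real_inner_le_norm _ _
  have hΔle : ‖Δ‖ ≤ σ * ‖Kx (S i).1‖ / (2 * lam * m) := by
    rcases eq_or_lt_of_le (norm_nonneg Δ) with h0 | h0
    · rw [← h0]
      positivity
    · have h1 : 2 * lam * ‖Δ‖^2 ≤ σ * (‖Δ‖ * ‖Kx (S i).1‖) / m := by
        calc 2 * lam * ‖Δ‖^2 ≤ σ * |d| / m := key
          _ ≤ σ * (‖Δ‖ * ‖Kx (S i).1‖) / m := by gcongr
      rw [le_div_iff₀ (by positivity : (0:ℝ) < m)] at h1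
      rw [le_div_iff₀ (by positivity : (0:ℝ) < 2 * lam * m)]
      nlinarith
  -- final bound
  have hfinal : |c (ev fS z.1) z.2 - c (ev fi z.1) z.2|
      ≤ σ^2 * ‖Kx (S i).1‖ * ‖Kx z.1‖ / (2 * lam * m) := by
    have h1 : |c (ev fS z.1) z.2 - c (ev fi z.1) z.2| ≤ σ * |ev fS z.1 - ev fi z.1| :=
      hadm _ _ _
    have h2 : |ev fS z.1 - ev fi z.1| ≤ ‖Δ‖ * ‖Kx z.1‖ := by
      have : ev fS z.1 - ev fi z.1 = ⟪-Δ, Kx z.1⟫ := by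
        rw [hrepr fS, hrepr fi, hΔ, inner_neg_left, inner_sub_left]; ring
      rw [this]
      calc |⟪-Δ, Kx z.1⟫| ≤ ‖-Δ‖ * ‖Kx z.1‖ := abs_real_inner_le_norm _ _
        _ = ‖Δ‖ * ‖Kx z.1‖ := by rw [norm_neg]
    calc |c (ev fS z.1) z.2 - c (ev fi z.1) z.2| ≤ σ * |ev fS z.1 - ev fi z.1| := h1
      _ ≤ σ * (‖Δ‖ * ‖Kx z.1‖) := by gcongr
      _ ≤ σ * ((σ * ‖Kx (S i).1‖ / (2 * lam * m)) * ‖Kx z.1‖) := by gcongr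
      _ = σ^2 * ‖Kx (S i).1‖ * ‖Kx z.1‖ / (2 * lam * m) := by ring
  have hki : ‖Kx (S i).1‖ ≤ κ := by have := hκ (S i).1; rwa [hKnorm] at this
  have hkz : ‖Kx z.1‖ ≤ κ := by have := hκ z.1; rwa [hKnorm] at this
  constructor
  · rw [hKnorm, hKnorm]; exact hfinal
  · refine le_trans hfinal ?_
    have hnum : σ^2 * ‖Kx (S i).1‖ * ‖Kx z.1‖ ≤ σ^2 * κ^2 := by
      nlinarith [mul_le_mul hki hkz (norm_nonneg _) hκ0, sq_nonneg σ,
        mul_le_mul_of_nonneg_left (mul_le_mul hki hkz (norm_nonneg _) hκ0) (sq_nonneg σ)]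
    exact (div_le_div_iff_of_pos_right (by positivity)).mpr hnum
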